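/- The triple (H(X,Ω), Δ_λ, ε) is a coassociative counital coalgebra: (Δ_λ ⊗ id) ∘ Δ_λ = (id ⊗ Δ_λ) ∘ Δ_λ, and under the canonical identifications k ⊗ H(X,Ω) ≅ H(X,Ω) ≅ H(X,Ω) ⊗ k one has (ε ⊗ id) ∘ Δ_λ = id = (id ⊗ ε) ∘ Δ_λ. -/

import Mathlib

open scoped TensorProduct

universe u v w u'

/-- Decorated planar rooted trees: internal vertices are decorated by `Ω`,
leaves are decorated by `X ⊔ Ω` (a leaf decorated by `ω : Ω` is `node ω []`). -/
inductive PTree (X : Type u) (Ω : Type v) : Type (max u v)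
  | leafX : X → PTree X Ω
  | node : Ω → List (PTree X Ω) → PTree X Ω

namespace Moerdijk

variable {X : Type u} {Ω : Type v}

/-- `ℱ(X,Ω)`: decorated planar rooted forests, i.e. the free monoid on decorated
planar rooted trees under concatenation. -/
abbrev RForest (X : Type u) (Ω : Type v) := FreeMonoid (PTree X Ω)

/-- The single-vertex forest `•ₓ` for `x ∈ X`. -/
def leafF (x : X) : RForest X Ω := FreeMonoid.of (PTree.leafX x)

/-- Grafting of a forest onto a new common root decorated by `ω`. -/
def graft (ω : Ω) (F : RForest X Ω) : RForest X Ω :=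
  FreeMonoid.of (PTree.node ω (FreeMonoid.toList F))

variable (k : Type w) [CommRing k]

/-- `H(X,Ω)`: the free `k`-module on decorated planar rooted forests, a unital
associative algebra under the concatenation product. -/
abbrev RAlg (X : Type u) (Ω : Type v) := MonoidAlgebra k (RForest X Ω)

/-- The basis element of `H(X,Ω)` corresponding to a forest `F`. -/
noncomputable def ofF (F : RForest X Ω) : RAlg k X Ω := MonoidAlgebra.of k (RForest X Ω) F

/-- The grafting operator `B⁺_ω : H(X,Ω) → H(X,Ω)` as a linear map. -/
noncomputable def Bplus (ω : Ω) : RAlg k X Ω →ₗ[k] RAlg k X Ω :=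
  (MonoidAlgebra.coeffLinearEquiv k).symm.toLinearMap ∘ₗ Finsupp.lmapDomain k k (graft ω) ∘ₗ
    (MonoidAlgebra.coeffLinearEquiv k).toLinearMap

/-- The value of the coproduct `Δ_λ` on a decorated planar rooted tree:
`Δ_λ(•ₓ) = •ₓ ⊗ 1 + 1 ⊗ •ₓ + λ •ₓ ⊗ •ₓ` and
`Δ_λ(B⁺_ω(F)) = (B⁺_ω ⊗ id)Δ_λ(F) + (id ⊗ B⁺_ω)Δ_λ(F)`. -/
noncomputable def DeltaT (lam : k) : PTree X Ω → (RAlg k X Ω ⊗[k] RAlg k X Ω)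
  | .leafX x =>
      ofF k (leafF x) ⊗ₜ[k] 1 + 1 ⊗ₜ[k] ofF k (leafF x)
        + lam • (ofF k (leafF x) ⊗ₜ[k] ofF k (leafF x))
  | .node ω ts =>
      ((TensorProduct.map (Bplus k ω) LinearMap.id
        + TensorProduct.map LinearMap.id (Bplus k ω) :
          (RAlg k X Ω ⊗[k] RAlg k X Ω) →ₗ[k] (RAlg k X Ω ⊗[k] RAlg k X Ω)))
        ((ts.attach.map fun t => DeltaT lam t.1).prod)
decreasing_by
  have := List.sizeOf_lt_of_mem t.2
  simp only [PTree.node.sizeOf_spec]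
  omega

/-- The value of the coproduct `Δ_λ` on a forest: `Δ_λ(T₁⋯Tₘ) = Δ_λ(T₁)⋯Δ_λ(Tₘ)`. -/
noncomputable def DeltaF (lam : k) (F : RForest X Ω) : RAlg k X Ω ⊗[k] RAlg k X Ω :=
  ((FreeMonoid.toList F).map (DeltaT k lam)).prod

/-- The coproduct `Δ_λ : H(X,Ω) → H(X,Ω) ⊗ H(X,Ω)`. -/
noncomputable def Delta (lam : k) : RAlg k X Ω →ₗ[k] (RAlg k X Ω ⊗[k] RAlg k X Ω) :=
  (Finsupp.lsum k fun F => LinearMap.toSpanSingleton k _ (DeltaF k lam F)) ∘ₗ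
    (MonoidAlgebra.coeffLinearEquiv k).toLinearMap

/-- The counit `ε : H(X,Ω) → k`, sending the empty forest to `1` and every
nonempty forest to `0`. -/
noncomputable def eps : RAlg k X Ω →ₗ[k] k :=
  (Finsupp.lsum k fun F => LinearMap.toSpanSingleton k k
    (if (FreeMonoid.toList F).isEmpty then (1 : k) else 0)) ∘ₗ
    (MonoidAlgebra.coeffLinearEquiv k).toLinearMap

/-! ### Auxiliary development -/

lemma lhom_ext_single {N : Type*} [AddCommMonoid N] [Module k N]
    ⦃φ ψ : RAlg k X Ω →ₗ[k] N⦄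
    (h : ∀ (F : RForest X Ω) (b : k), φ (MonoidAlgebra.single F b) = ψ (MonoidAlgebra.single F b)) :
    φ = ψ :=
  MonoidAlgebra.lhom_ext' fun F => LinearMap.ext fun b => h F b


lemma single_eq_ofF (F : RForest X Ω) (b : k) :
    (MonoidAlgebra.single F b : RAlg k X Ω) = b • ofF k F := by
  exact (MonoidAlgebra.smul_of F b).symm

lemma Delta_ofF (lam : k) (F : RForest X Ω) :
    Delta k lam (ofF k F) = DeltaF k lam F := by
  show (Finsupp.lsum k fun G => LinearMap.toSpanSingleton k _ (DeltaF k lam G))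
      (Finsupp.single F (1 : k)) = _
  rw [Finsupp.lsum_single, LinearMap.toSpanSingleton_apply, one_smul]

lemma eps_ofF (F : RForest X Ω) :
    eps k (ofF (Ω := Ω) k F) = (if (FreeMonoid.toList F).isEmpty then (1 : k) else 0) := by
  show (Finsupp.lsum k fun G => LinearMap.toSpanSingleton k k
      (if (FreeMonoid.toList G).isEmpty then (1 : k) else 0)) (Finsupp.single F (1 : k)) = _
  rw [Finsupp.lsum_single, LinearMap.toSpanSingleton_apply, one_smul]

/-- `Δ_λ` as an algebra homomorphism. -/
noncomputable def DeltaA (lam : k) : RAlg k X Ω →ₐ[k] (RAlg k X Ω ⊗[k] RAlg k X Ω) :=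
  MonoidAlgebra.lift k _ (RForest X Ω) (FreeMonoid.lift (DeltaT k lam))

/-- `ε` as an algebra homomorphism. -/
noncomputable def epsA : RAlg k X Ω →ₐ[k] k :=
  MonoidAlgebra.lift k k (RForest X Ω) (FreeMonoid.lift (fun _ : PTree X Ω => (0 : k)))

lemma DeltaA_ofF (lam : k) (F : RForest X Ω) :
    DeltaA k lam (ofF k F) = DeltaF k lam F := by
  simp [DeltaA, ofF, FreeMonoid.lift_apply, DeltaF]

lemma Delta_eq (lam : k) : Delta k lam = (DeltaA (X := X) (Ω := Ω) k lam).toLinearMap := by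
  apply lhom_ext_single
  intro F b
  rw [single_eq_ofF k F b, map_smul, map_smul]
  congr 1
  exact (Delta_ofF k lam F).trans (DeltaA_ofF k lam F).symm

lemma epsA_ofF (F : RForest X Ω) :
    epsA (X := X) (Ω := Ω) k (ofF k F) =
      (if (FreeMonoid.toList F).isEmpty then (1 : k) else 0) := by
  simp only [epsA, ofF, MonoidAlgebra.lift_of, FreeMonoid.lift_apply]
  cases h : FreeMonoid.toList F with
  | nil => simp [h]
  | cons a l => simp [h]

lemma eps_eq : eps k = (epsA (X := X) (Ω := Ω) k).toLinearMap := by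
  apply lhom_ext_single
  intro F b
  rw [single_eq_ofF k F b, map_smul, map_smul]
  congr 1
  exact (eps_ofF k F).trans (epsA_ofF k F).symm

lemma Bplus_ofF (ω : Ω) (F : RForest X Ω) :
    Bplus k ω (ofF k F) = ofF k (graft ω F) := by
  show MonoidAlgebra.mapDomainLinearMap k k (graft ω) (MonoidAlgebra.single F 1) =
    MonoidAlgebra.single (graft ω F) 1
  exact MonoidAlgebra.mapDomainLinearMap_single _ _ _

lemma ofF_ofList (l : List (PTree X Ω)) :
    ofF k (FreeMonoid.ofList l) = (l.map fun t => ofF k (FreeMonoid.of t)).prod := by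
  induction l with
  | nil =>
    rw [FreeMonoid.ofList_nil, List.map_nil, List.prod_nil]
    exact map_one (MonoidAlgebra.of k (RForest X Ω))
  | cons a l ih =>
      rw [FreeMonoid.ofList_cons, List.map_cons, List.prod_cons, ← ih]
      exact map_mul (MonoidAlgebra.of k (RForest X Ω)) _ _

lemma DeltaT_node (lam : k) (ω : Ω) (ts : List (PTree X Ω)) :
    DeltaT k lam (.node ω ts) =
      ((TensorProduct.map (Bplus k ω) LinearMap.id
        + TensorProduct.map LinearMap.id (Bplus k ω) :
          (RAlg k X Ω ⊗[k] RAlg k X Ω) →ₗ[k] (RAlg k X Ω ⊗[k] RAlg k X Ω)))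
      (DeltaA k lam (ofF k (FreeMonoid.ofList ts))) := by
  rw [DeltaT, DeltaA_ofF]
  congr 1
  rw [List.attach_map_val]
  rfl

lemma DeltaA_ofF_of (lam : k) (t : PTree X Ω) :
    DeltaA k lam (ofF k (FreeMonoid.of t)) = DeltaT k lam t := by
  rw [DeltaA_ofF]
  simp [DeltaF, FreeMonoid.toList_of]

/-- Key recursion: `Δ ∘ B⁺_ω = (B⁺_ω ⊗ id + id ⊗ B⁺_ω) ∘ Δ`. -/
lemma DeltaA_comp_Bplus (lam : k) (ω : Ω) :
    (DeltaA (X := X) (Ω := Ω) k lam).toLinearMap ∘ₗ Bplus k ω =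
      ((TensorProduct.map (Bplus k ω) LinearMap.id
        + TensorProduct.map LinearMap.id (Bplus k ω) :
          (RAlg k X Ω ⊗[k] RAlg k X Ω) →ₗ[k] (RAlg k X Ω ⊗[k] RAlg k X Ω))) ∘ₗ
        (DeltaA k lam).toLinearMap := by
  apply lhom_ext_single
  intro F b
  rw [single_eq_ofF k F b]
  simp only [LinearMap.comp_apply, map_smul]
  congr 1
  show DeltaA k lam (Bplus k ω (ofF k F)) = _
  rw [Bplus_ofF, DeltaA_ofF]
  have h3 : DeltaF k lam (graft ω F) = DeltaT k lam (.node ω (FreeMonoid.toList F)) := by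
    simp [DeltaF, graft, FreeMonoid.toList_of]
  rw [h3, DeltaT_node, FreeMonoid.ofList_toList]
  rfl

lemma epsA_comp_Bplus (ω : Ω) :
    (epsA (X := X) (Ω := Ω) k).toLinearMap ∘ₗ Bplus k ω = 0 := by
  apply lhom_ext_single
  intro F b
  rw [single_eq_ofF k F b]
  simp only [LinearMap.comp_apply, map_smul, LinearMap.zero_apply, smul_eq_mul, mul_zero]
  show b * epsA k (Bplus k ω (ofF k F)) = 0
  rw [Bplus_ofF, epsA_ofF]
  simp [graft, FreeMonoid.toList_of]

/-- Algebra homs out of `H(X,Ω)` agree if they agree on trees. -/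
lemma algHom_ext_trees {B : Type u'} [Semiring B] [Algebra k B]
    {φ ψ : RAlg k X Ω →ₐ[k] B}
    (h : ∀ t : PTree X Ω, φ (ofF k (FreeMonoid.of t)) = ψ (ofF k (FreeMonoid.of t))) :
    φ = ψ := by
  refine MonoidAlgebra.algHom_ext ?_ (Subsingleton.elim _ _)
  intro F
  show φ (ofF k F) = ψ (ofF k F)
  rw [← FreeMonoid.ofList_toList F, ofF_ofList, map_list_prod, map_list_prod]
  simp only [List.map_map]
  congr 1
  exact List.map_congr_left fun t _ => h t

section Core
set_option synthInstance.maxHeartbeats 1000000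
set_option maxHeartbeats 1000000

variable (lam : k)

/-- LHS of coassociativity as an algebra hom. -/
noncomputable def PhiA : (RAlg k X Ω ⊗[k] RAlg k X Ω) →ₐ[k]
    (RAlg k X Ω ⊗[k] (RAlg k X Ω ⊗[k] RAlg k X Ω)) :=
  (Algebra.TensorProduct.assoc k k k (RAlg k X Ω) (RAlg k X Ω) (RAlg k X Ω)).toAlgHom.comp
    (Algebra.TensorProduct.map (DeltaA k lam) (AlgHom.id k (RAlg k X Ω)))

/-- RHS of coassociativity as an algebra hom. -/
noncomputable def PsiA : (RAlg k X Ω ⊗[k] RAlg k X Ω) →ₐ[k]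
    (RAlg k X Ω ⊗[k] (RAlg k X Ω ⊗[k] RAlg k X Ω)) :=
  Algebra.TensorProduct.map (AlgHom.id k (RAlg k X Ω)) (DeltaA k lam)

noncomputable def Bsum (ω : Ω) :
    (RAlg k X Ω ⊗[k] RAlg k X Ω) →ₗ[k] (RAlg k X Ω ⊗[k] RAlg k X Ω) :=
  TensorProduct.map (Bplus k ω) LinearMap.id + TensorProduct.map LinearMap.id (Bplus k ω)

noncomputable def B1 (ω : Ω) :
    (RAlg k X Ω ⊗[k] (RAlg k X Ω ⊗[k] RAlg k X Ω)) →ₗ[k]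
      (RAlg k X Ω ⊗[k] (RAlg k X Ω ⊗[k] RAlg k X Ω)) :=
  TensorProduct.map (Bplus k ω) LinearMap.id

noncomputable def B2 (ω : Ω) :
    (RAlg k X Ω ⊗[k] (RAlg k X Ω ⊗[k] RAlg k X Ω)) →ₗ[k]
      (RAlg k X Ω ⊗[k] (RAlg k X Ω ⊗[k] RAlg k X Ω)) :=
  TensorProduct.map LinearMap.id (TensorProduct.map (Bplus k ω) LinearMap.id)

noncomputable def B3 (ω : Ω) :
    (RAlg k X Ω ⊗[k] (RAlg k X Ω ⊗[k] RAlg k X Ω)) →ₗ[k]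
      (RAlg k X Ω ⊗[k] (RAlg k X Ω ⊗[k] RAlg k X Ω)) :=
  TensorProduct.map LinearMap.id (TensorProduct.map LinearMap.id (Bplus k ω))

lemma DeltaA_node (ω : Ω) (ts : List (PTree X Ω)) :
    DeltaT k lam (.node ω ts) = Bsum k ω (DeltaA k lam (ofF k (FreeMonoid.ofList ts))) :=
  DeltaT_node k lam ω ts

lemma DeltaA_Bplus_apply (ω : Ω) (x : RAlg k X Ω) :
    DeltaA k lam (Bplus k ω x) =
      TensorProduct.map (Bplus k ω) LinearMap.id (DeltaA k lam x)
        + TensorProduct.map LinearMap.id (Bplus k ω) (DeltaA k lam x) := by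
  have := LinearMap.congr_fun (DeltaA_comp_Bplus k lam ω) x
  simpa using this

lemma Phi_comp_Bsum (ω : Ω) :
    (PhiA (X := X) (Ω := Ω) k lam).toLinearMap ∘ₗ Bsum k ω =
      (B1 (X := X) (Ω := Ω) k ω + B2 k ω + B3 k ω) ∘ₗ (PhiA (X := X) (Ω := Ω) k lam).toLinearMap := by
  apply TensorProduct.ext'
  intro x y
  have key1 : ∀ (u : RAlg k X Ω ⊗[k] RAlg k X Ω) (y : RAlg k X Ω),
      (Algebra.TensorProduct.assoc k k k (RAlg k X Ω) (RAlg k X Ω) (RAlg k X Ω))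
        ((TensorProduct.map (Bplus k ω) LinearMap.id u) ⊗ₜ[k] y) =
      B1 k ω ((Algebra.TensorProduct.assoc k k k (RAlg k X Ω) (RAlg k X Ω) (RAlg k X Ω))
        (u ⊗ₜ[k] y)) := by
    intro u y
    induction u using TensorProduct.induction_on with
    | zero => simp
    | tmul a b => simp [B1, Algebra.TensorProduct.assoc_tmul]
    | add u v hu hv =>
        simp only [map_add, TensorProduct.add_tmul] at *
        rw [hu, hv]
  have key2 : ∀ (u : RAlg k X Ω ⊗[k] RAlg k X Ω) (y : RAlg k X Ω),
      (Algebra.TensorProduct.assoc k k k (RAlg k X Ω) (RAlg k X Ω) (RAlg k X Ω))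
        ((TensorProduct.map LinearMap.id (Bplus k ω) u) ⊗ₜ[k] y) =
      B2 k ω ((Algebra.TensorProduct.assoc k k k (RAlg k X Ω) (RAlg k X Ω) (RAlg k X Ω))
        (u ⊗ₜ[k] y)) := by
    intro u y
    induction u using TensorProduct.induction_on with
    | zero => simp
    | tmul a b => simp [B2, Algebra.TensorProduct.assoc_tmul]
    | add u v hu hv =>
        simp only [map_add, TensorProduct.add_tmul] at *
        rw [hu, hv]
  have key3 : ∀ (u : RAlg k X Ω ⊗[k] RAlg k X Ω) (y : RAlg k X Ω),
      (Algebra.TensorProduct.assoc k k k (RAlg k X Ω) (RAlg k X Ω) (RAlg k X Ω))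
        (u ⊗ₜ[k] (Bplus k ω y)) =
      B3 k ω ((Algebra.TensorProduct.assoc k k k (RAlg k X Ω) (RAlg k X Ω) (RAlg k X Ω))
        (u ⊗ₜ[k] y)) := by
    intro u y
    induction u using TensorProduct.induction_on with
    | zero => simp
    | tmul a b => simp [B3, Algebra.TensorProduct.assoc_tmul]
    | add u v hu hv =>
        simp only [map_add, TensorProduct.add_tmul] at *
        rw [hu, hv]
  have hphi : ∀ (x y : RAlg k X Ω), PhiA k lam (x ⊗ₜ[k] y) =
      (Algebra.TensorProduct.assoc k k k (RAlg k X Ω) (RAlg k X Ω) (RAlg k X Ω))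
        ((DeltaA k lam x) ⊗ₜ[k] y) := by
    intro x y
    simp [PhiA]
  simp only [LinearMap.comp_apply, Bsum, LinearMap.add_apply, TensorProduct.map_tmul,
    LinearMap.id_apply, AlgHom.toLinearMap_apply, map_add]
  rw [hphi, hphi, hphi, DeltaA_Bplus_apply, TensorProduct.add_tmul, map_add,
    key1, key2, key3]

lemma Psi_comp_Bsum (ω : Ω) :
    (PsiA (X := X) (Ω := Ω) k lam).toLinearMap ∘ₗ Bsum k ω =
      (B1 (X := X) (Ω := Ω) k ω + B2 k ω + B3 k ω) ∘ₗ (PsiA (X := X) (Ω := Ω) k lam).toLinearMap := by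
  apply TensorProduct.ext'
  intro x y
  have hpsi : ∀ (x y : RAlg k X Ω), PsiA k lam (x ⊗ₜ[k] y) = x ⊗ₜ[k] (DeltaA k lam y) := by
    intro x y; simp [PsiA]
  simp only [LinearMap.comp_apply, Bsum, LinearMap.add_apply, TensorProduct.map_tmul,
    LinearMap.id_apply, AlgHom.toLinearMap_apply, map_add]
  rw [hpsi, hpsi, hpsi, DeltaA_Bplus_apply, TensorProduct.tmul_add]
  simp only [B1, B2, B3, LinearMap.add_apply, TensorProduct.map_tmul, LinearMap.id_apply]
  abel

/-- Coassociativity on the coproduct of a single tree. -/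
lemma coassocT (t : PTree X Ω) :
    PhiA k lam (DeltaT k lam t) = PsiA k lam (DeltaT k lam t) := by
  match t with
  | .leafX x =>
    have hd : DeltaT k lam (PTree.leafX x) =
        ofF k (leafF x) ⊗ₜ[k] (1 : RAlg k X Ω) + (1 : RAlg k X Ω) ⊗ₜ[k] ofF k (leafF x)
          + lam • (ofF k (leafF x) ⊗ₜ[k] ofF k (leafF x)) := by
      rw [DeltaT]
    have ha : DeltaA k lam (ofF k (leafF x)) =
        ofF k (leafF x) ⊗ₜ[k] 1 + 1 ⊗ₜ[k] ofF k (leafF x)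
          + lam • (ofF k (leafF x) ⊗ₜ[k] ofF k (leafF x)) :=
      (DeltaA_ofF_of k lam (PTree.leafX x)).trans hd
    rw [hd]
    simp only [map_add, map_smul, PhiA, PsiA, AlgHom.comp_apply,
      AlgEquiv.toAlgHom_eq_coe, AlgHom.coe_coe, AlgEquiv.coe_toAlgHom, Algebra.TensorProduct.map_tmul,
      AlgHom.coe_id, id_eq, ha, map_one, Algebra.TensorProduct.one_def,
      TensorProduct.add_tmul, TensorProduct.tmul_add, TensorProduct.tmul_smul,
      ← TensorProduct.smul_tmul', Algebra.TensorProduct.assoc_tmul]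
    module
  | .node ω ts =>
    rw [DeltaA_node]
    have h1 := LinearMap.congr_fun (Phi_comp_Bsum k lam ω)
      (DeltaA k lam (ofF k (FreeMonoid.ofList ts)))
    have h2 := LinearMap.congr_fun (Psi_comp_Bsum k lam ω)
      (DeltaA k lam (ofF k (FreeMonoid.ofList ts)))
    simp only [LinearMap.comp_apply, AlgHom.toLinearMap_apply] at h1 h2
    rw [h1, h2]
    congr 1
    rw [ofF_ofList]
    have hP : ∀ l : List (RAlg k X Ω ⊗[k] RAlg k X Ω), PhiA k lam l.prod = (l.map (PhiA k lam)).prod :=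
      fun l => map_list_prod (PhiA (X := X) (Ω := Ω) k lam).toRingHom l
    have hQ : ∀ l : List (RAlg k X Ω ⊗[k] RAlg k X Ω), PsiA k lam l.prod = (l.map (PsiA k lam)).prod :=
      fun l => map_list_prod (PsiA (X := X) (Ω := Ω) k lam).toRingHom l
    rw [map_list_prod, hP, hQ]
    simp only [map_list_prod, List.map_map]
    congr 1
    apply List.map_congr_left
    intro t ht
    simp only [Function.comp_apply]
    rw [DeltaA_ofF_of]
    exact coassocT t
decreasing_by
  have := List.sizeOf_lt_of_mem ht
  simp only [PTree.node.sizeOf_spec]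
  omega

/-- `(ε ⊗ id)` followed by `lid`, as an algebra hom. -/
noncomputable def EA : (RAlg k X Ω ⊗[k] RAlg k X Ω) →ₐ[k] RAlg k X Ω :=
  (Algebra.TensorProduct.lid k (RAlg k X Ω)).toAlgHom.comp
    (Algebra.TensorProduct.map (epsA k) (AlgHom.id k (RAlg k X Ω)))

/-- `(id ⊗ ε)` followed by `rid`, as an algebra hom. -/
noncomputable def RA : (RAlg k X Ω ⊗[k] RAlg k X Ω) →ₐ[k] RAlg k X Ω :=
  (Algebra.TensorProduct.rid k k (RAlg k X Ω)).toAlgHom.comp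
    (Algebra.TensorProduct.map (AlgHom.id k (RAlg k X Ω)) (epsA k))

lemma EA_tmul (x y : RAlg k X Ω) : EA k (x ⊗ₜ[k] y) = epsA k x • y := by
  simp [EA, Algebra.TensorProduct.lid_tmul]

lemma RA_tmul (x y : RAlg k X Ω) : RA k (x ⊗ₜ[k] y) = epsA k y • x := by
  simp [RA, Algebra.TensorProduct.rid_tmul]

lemma epsA_Bplus_apply (ω : Ω) (x : RAlg k X Ω) : epsA k (Bplus k ω x) = 0 := by
  have := LinearMap.congr_fun (epsA_comp_Bplus k ω) x
  simpa using this

lemma EA_comp_Bsum (ω : Ω) :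
    (EA (X := X) (Ω := Ω) k).toLinearMap ∘ₗ Bsum k ω =
      (Bplus k ω) ∘ₗ (EA (X := X) (Ω := Ω) k).toLinearMap := by
  apply TensorProduct.ext'
  intro x y
  simp only [LinearMap.comp_apply, Bsum, LinearMap.add_apply, TensorProduct.map_tmul,
    LinearMap.id_apply, AlgHom.toLinearMap_apply, map_add, EA_tmul,
    epsA_Bplus_apply, zero_smul, zero_add, map_smul]

lemma RA_comp_Bsum (ω : Ω) :
    (RA (X := X) (Ω := Ω) k).toLinearMap ∘ₗ Bsum k ω =
      (Bplus k ω) ∘ₗ (RA (X := X) (Ω := Ω) k).toLinearMap := by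
  apply TensorProduct.ext'
  intro x y
  simp only [LinearMap.comp_apply, Bsum, LinearMap.add_apply, TensorProduct.map_tmul,
    LinearMap.id_apply, AlgHom.toLinearMap_apply, map_add, RA_tmul,
    epsA_Bplus_apply, zero_smul, add_zero, map_smul]

lemma epsA_leaf (x : X) : epsA (Ω := Ω) k (ofF k (leafF x)) = 0 := by
  rw [epsA_ofF]
  simp [leafF, FreeMonoid.toList_of]

lemma counitL_T (t : PTree X Ω) : EA k (DeltaT k lam t) = ofF k (FreeMonoid.of t) := by
  match t with
  | .leafX x =>
    have hd : DeltaT k lam (PTree.leafX x) =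
        ofF k (leafF x) ⊗ₜ[k] (1 : RAlg k X Ω) + (1 : RAlg k X Ω) ⊗ₜ[k] ofF k (leafF x)
          + lam • (ofF k (leafF x) ⊗ₜ[k] ofF k (leafF x)) := by
      rw [DeltaT]
    rw [hd]
    simp only [map_add, map_smul, EA_tmul, epsA_leaf, map_one, zero_smul, one_smul,
      smul_zero, add_zero, zero_add]
    rfl
  | .node ω ts =>
    rw [DeltaA_node]
    have h1 := LinearMap.congr_fun (EA_comp_Bsum k ω)
      (DeltaA k lam (ofF k (FreeMonoid.ofList ts)))
    simp only [LinearMap.comp_apply, AlgHom.toLinearMap_apply] at h1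
    rw [h1]
    have h2 : EA k (DeltaA k lam (ofF k (FreeMonoid.ofList ts)))
        = ofF k (FreeMonoid.ofList ts) := by
      rw [ofF_ofList]
      simp only [map_list_prod, List.map_map]
      congr 1
      apply List.map_congr_left
      intro t ht
      simp only [Function.comp_apply]
      rw [DeltaA_ofF_of]
      exact counitL_T t
    rw [h2, Bplus_ofF]
    rfl
decreasing_by
  have := List.sizeOf_lt_of_mem ht
  simp only [PTree.node.sizeOf_spec]
  omega

lemma counitR_T (t : PTree X Ω) : RA k (DeltaT k lam t) = ofF k (FreeMonoid.of t) := by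
  match t with
  | .leafX x =>
    have hd : DeltaT k lam (PTree.leafX x) =
        ofF k (leafF x) ⊗ₜ[k] (1 : RAlg k X Ω) + (1 : RAlg k X Ω) ⊗ₜ[k] ofF k (leafF x)
          + lam • (ofF k (leafF x) ⊗ₜ[k] ofF k (leafF x)) := by
      rw [DeltaT]
    rw [hd]
    simp only [map_add, map_smul, RA_tmul, epsA_leaf, map_one, zero_smul, one_smul,
      smul_zero, add_zero, zero_add]
    rfl
  | .node ω ts =>
    rw [DeltaA_node]
    have h1 := LinearMap.congr_fun (RA_comp_Bsum k ω)
      (DeltaA k lam (ofF k (FreeMonoid.ofList ts)))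
    simp only [LinearMap.comp_apply, AlgHom.toLinearMap_apply] at h1
    rw [h1]
    have h2 : RA k (DeltaA k lam (ofF k (FreeMonoid.ofList ts)))
        = ofF k (FreeMonoid.ofList ts) := by
      rw [ofF_ofList]
      simp only [map_list_prod, List.map_map]
      congr 1
      apply List.map_congr_left
      intro t ht
      simp only [Function.comp_apply]
      rw [DeltaA_ofF_of]
      exact counitR_T t
    rw [h2, Bplus_ofF]
    rfl
decreasing_by
  have := List.sizeOf_lt_of_mem ht
  simp only [PTree.node.sizeOf_spec]
  omega

lemma coassoc_alg : (PhiA (X := X) (Ω := Ω) k lam).comp (DeltaA k lam) = (PsiA (X := X) (Ω := Ω) k lam).comp (DeltaA k lam) :=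
  algHom_ext_trees k fun t => by
    simp only [AlgHom.comp_apply, DeltaA_ofF_of]
    exact coassocT k lam t

lemma counitL_alg : (EA (X := X) (Ω := Ω) k).comp (DeltaA k lam) = AlgHom.id k (RAlg k X Ω) :=
  algHom_ext_trees k fun t => by
    simp only [AlgHom.comp_apply, DeltaA_ofF_of, AlgHom.coe_id, id_eq]
    exact counitL_T k lam t

lemma counitR_alg : (RA (X := X) (Ω := Ω) k).comp (DeltaA k lam) = AlgHom.id k (RAlg k X Ω) :=
  algHom_ext_trees k fun t => by
    simp only [AlgHom.comp_apply, DeltaA_ofF_of, AlgHom.coe_id, id_eq]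
    exact counitR_T k lam t

end Core


/-- `(H(X,Ω), Δ_λ, ε)` is a coassociative counital coalgebra. -/
theorem coalgebra_structure [Nonempty Ω] (lam : k) :
    ((TensorProduct.assoc k (RAlg k X Ω) (RAlg k X Ω) (RAlg k X Ω)).toLinearMap ∘ₗ
        TensorProduct.map (Delta k lam) LinearMap.id ∘ₗ Delta k lam
      = TensorProduct.map LinearMap.id (Delta k lam) ∘ₗ Delta k lam) ∧
    ((TensorProduct.lid k (RAlg k X Ω)).toLinearMap ∘ₗ
        TensorProduct.map (eps k) LinearMap.id ∘ₗ Delta k lam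
      = (LinearMap.id : RAlg k X Ω →ₗ[k] RAlg k X Ω)) ∧
    ((TensorProduct.rid k (RAlg k X Ω)).toLinearMap ∘ₗ
        TensorProduct.map LinearMap.id (eps k) ∘ₗ Delta k lam
      = (LinearMap.id : RAlg k X Ω →ₗ[k] RAlg k X Ω)) := by
  refine ⟨?_, ?_, ?_⟩
  · rw [Delta_eq]
    apply LinearMap.ext
    intro z
    exact DFunLike.congr_fun (coassoc_alg k lam) z
  · rw [Delta_eq, eps_eq]
    apply LinearMap.ext
    intro z
    exact DFunLike.congr_fun (counitL_alg k lam) z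
  · rw [Delta_eq, eps_eq]
    apply LinearMap.ext
    intro z
    have h := DFunLike.congr_fun (counitR_alg k lam) z
    have hr : ∀ w : RAlg k X Ω ⊗[k] k,
        (TensorProduct.rid k (RAlg k X Ω)) w
          = (Algebra.TensorProduct.rid k k (RAlg k X Ω)) w := by
      intro w
      induction w using TensorProduct.induction_on with
      | zero => simp
      | tmul a r => rw [TensorProduct.rid_tmul, Algebra.TensorProduct.rid_tmul]
      | add u v hu hv => rw [map_add, map_add, hu, hv]
    show (TensorProduct.rid k (RAlg k X Ω))
        (TensorProduct.map LinearMap.id (epsA k).toLinearMap ((DeltaA k lam) z)) = z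
    rw [hr]
    exact h


end Moerdijk
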